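/- For every odd integer n ≥ 3, any two vertices of the Hecke graph G4(n) are joined by a walk of length at most 4 (so G4(n) is connected with diameter at most 4). Likewise, for every integer n ≥ 2 not divisible by 3, any two vertices of the Hecke graph G6(n) are joined by a walk of length at most 4. -/

import Mathlib

/-- The equivalence relation identifying `(a,c)` with `(-a,-c)` on the set of pairs of
elements of `ℤ/nℤ` generating the unit ideal. -/
def FareySetoid (n : ℕ) : Setoid {p : ZMod n × ZMod n // IsCoprime p.1 p.2} where
  r p q := p.1 = q.1 ∨ p.1 = -q.1
  iseqv := by
    constructor
    · intro p; exact Or.inl rfl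
    · rintro p q (h | h)
      · exact Or.inl h.symm
      · right; rw [h, neg_neg]
    · rintro p q s (h1 | h1) (h2 | h2)
      · exact Or.inl (h1.trans h2)
      · right; rw [h1, h2]
      · right; rw [h1, h2]
      · left; rw [h1, h2, neg_neg]

/-- The vertices of the Farey graph `G3(n)`: classes `[a:c]` of pairs `(a,c) ∈ (ℤ/nℤ)²`
generating the unit ideal, with `(a,c) ~ (-a,-c)`. -/
def FareyVertex (n : ℕ) := Quotient (FareySetoid n)

/-- The vertex `[a:c]` of the Farey graph. -/
def FareyVertex.mk (n : ℕ) (a c : ZMod n) (h : IsCoprime a c) : FareyVertex n :=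
  Quotient.mk (FareySetoid n) ⟨(a, c), h⟩

/-- The Farey graph `G3(n)`: vertices `[a:c]` and `[b:d]` are adjacent iff
`ad - bc ≡ ±1 (mod n)`. -/
def FareyGraph (n : ℕ) : SimpleGraph (FareyVertex n) where
  Adj u v := u ≠ v ∧ ∃ a c b d : ZMod n,
    (∃ h, u = FareyVertex.mk n a c h) ∧ (∃ h, v = FareyVertex.mk n b d h) ∧
    (a * d - b * c = 1 ∨ a * d - b * c = -1)
  symm := by
    constructor
    rintro u v ⟨hne, a, c, b, d, hu, hv, h⟩
    refine ⟨hne.symm, b, d, a, c, hv, hu, ?_⟩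
    rcases h with h | h
    · right; linear_combination -h
    · left; linear_combination -h
  loopless := ⟨fun u h => h.1 rfl⟩

instance (n : ℕ) [NeZero n] : Finite (FareyVertex n) := Quotient.finite _

/-- A pair of integers `b, d` with `gcd(b, d, n) = 1` yields a pair generating the unit
ideal of `ℤ/nℤ`. -/
lemma isCoprime_zmod_of_gcd {n : ℕ} {b d : ℤ} (h : Int.gcd b (Int.gcd d n) = 1) :
    IsCoprime (b : ZMod n) (d : ZMod n) := by
  obtain ⟨u, v, huv⟩ := Int.isCoprime_iff_gcd_eq_one.mpr h
  have hgcd : ((Int.gcd d n : ℕ) : ℤ) = d * Int.gcdA d n + n * Int.gcdB d n :=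
    Int.gcd_eq_gcd_ab d (n : ℤ)
  refine ⟨(u : ZMod n), ((v * Int.gcdA d (n : ℤ) : ℤ) : ZMod n), ?_⟩
  have huv' : u * b + (v * Int.gcdA d (n : ℤ)) * d + (v * Int.gcdB d (n : ℤ)) * n = 1 := by
    rw [← huv, hgcd]; ring
  have := congrArg (fun z : ℤ => (z : ZMod n)) huv'
  push_cast at this
  rw [ZMod.natCast_self] at this
  push_cast
  linear_combination this
/-- The vertex `[b:d]` of `G3(n)` determined by integers `b`, `d` with `gcd(b,d,n) = 1`. -/
def FareyVertex.ofInt (n : ℕ) (b d : ℤ) (h : Int.gcd b (Int.gcd d n) = 1) : FareyVertex n :=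
  FareyVertex.mk n (b : ZMod n) (d : ZMod n) (isCoprime_zmod_of_gcd h)

/-- The number of vertices of the Farey graph `G3(n)`. -/
noncomputable def fareyCard (n : ℕ) : ℕ := Nat.card (FareyVertex n)

/-- The characteristic polynomial of the (real) adjacency matrix of the Farey
graph `G3(n)` (junk value `1` for `n = 0`). -/
noncomputable def fareyCharpoly (n : ℕ) : Polynomial ℝ :=
  if h : n = 0 then 1
  else
    letI : NeZero n := ⟨h⟩
    letI : Fintype (FareyVertex n) := Fintype.ofFinite _
    letI : DecidableEq (FareyVertex n) := Classical.decEq _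
    letI : DecidableRel (FareyGraph n).Adj := Classical.decRel _
    Matrix.charpoly ((FareyGraph n).adjMatrix ℝ)

/-- The spectrum of the Farey graph `G3(n)`: the multiset of real roots, with
multiplicity, of the characteristic polynomial of its adjacency matrix. -/
noncomputable def sp3 (n : ℕ) : Multiset ℝ := (fareyCharpoly n).roots

open Sum in
/-- The Hecke graph of level `n` with parameter `t` (the graphs `G4(n)` and `G6(n)` are
obtained for `t = 2` and `t = 3` respectively): the vertex set consists of two disjoint
copies of the vertices of `G3(n)` (even vertices `inl [a:c]` and odd vertices
`inr [b:d]`); an even vertex `[a:c]` and an odd vertex `[b:d]` are adjacent iff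
`ad - t·bc ≡ ±1 (mod n)`, and no two vertices of the same parity are adjacent. -/
def HeckeGraph (n : ℕ) (t : ℤ) : SimpleGraph (FareyVertex n ⊕ FareyVertex n) where
  Adj u v :=
    (∃ a c b d : ZMod n,
      (∃ h, u = inl (FareyVertex.mk n a c h)) ∧ (∃ h, v = inr (FareyVertex.mk n b d h)) ∧
      (a * d - (t : ZMod n) * (b * c) = 1 ∨ a * d - (t : ZMod n) * (b * c) = -1)) ∨
    (∃ a c b d : ZMod n,
      (∃ h, v = inl (FareyVertex.mk n a c h)) ∧ (∃ h, u = inr (FareyVertex.mk n b d h)) ∧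
      (a * d - (t : ZMod n) * (b * c) = 1 ∨ a * d - (t : ZMod n) * (b * c) = -1))
  symm := by
    constructor
    rintro u v (h | h)
    · exact Or.inr h
    · exact Or.inl h
  loopless := by
    constructor
    rintro u (⟨a, c, b, d, ⟨h₁, hu⟩, ⟨h₂, hv⟩, -⟩ | ⟨a, c, b, d, ⟨h₁, hv⟩, ⟨h₂, hu⟩, -⟩) <;>
      rw [hu] at hv
    · exact inl_ne_inr hv
    · exact inr_ne_inl hv

/-- The characteristic polynomial of the (real) adjacency matrix of the Hecke graph of
level `n` with parameter `t` (junk value `1` for `n = 0`). -/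
noncomputable def heckeCharpoly (n : ℕ) (t : ℤ) : Polynomial ℝ :=
  if h : n = 0 then 1
  else
    letI : NeZero n := ⟨h⟩
    letI : Fintype (FareyVertex n) := Fintype.ofFinite _
    letI : DecidableEq (FareyVertex n ⊕ FareyVertex n) := Classical.decEq _
    letI : DecidableRel (HeckeGraph n t).Adj := Classical.decRel _
    Matrix.charpoly ((HeckeGraph n t).adjMatrix ℝ)

/-- The spectrum of the Hecke graph of level `n` with parameter `t`: the multiset of real
roots, with multiplicity, of the characteristic polynomial of its adjacency matrix. -/
noncomputable def spHecke (n : ℕ) (t : ℤ) : Multiset ℝ := (heckeCharpoly n t).roots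

section AuxLemmas

/-- Auxiliary: given `gcd(A, B, n) = 1` with `n ≠ 0`, some `A + T*B` is coprime to `n`. -/
lemma intA (A B : ℤ) (n : ℕ) (hn0 : n ≠ 0) (h : Int.gcd A (Int.gcd B n) = 1) :
    ∃ T : ℤ, Int.gcd (A + T * B) n = 1 := by
  classical
  set s : Finset ℕ := n.primeFactors.filter (fun p => ¬ p ∣ A.natAbs) with hs
  refine ⟨((∏ p ∈ s, p : ℕ) : ℤ), ?_⟩
  set T : ℤ := ((∏ p ∈ s, p : ℕ) : ℤ) with hT
  rw [Nat.eq_one_iff_not_exists_prime_dvd]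
  intro p hp hdvd
  have hpz : Prime (p : ℤ) := Nat.prime_iff_prime_int.mp hp
  have hpAB : (p:ℤ) ∣ A + T * B :=
    dvd_trans (Int.natCast_dvd_natCast.mpr hdvd) (Int.gcd_dvd_left _ _)
  have hpn : (p:ℤ) ∣ (n:ℤ) :=
    dvd_trans (Int.natCast_dvd_natCast.mpr hdvd) (Int.gcd_dvd_right _ _)
  have hpn' : p ∣ n := Int.natCast_dvd_natCast.mp hpn
  by_cases hpA : p ∣ A.natAbs
  · have hpA' : (p:ℤ) ∣ A := by
      have h1 : (p:ℤ) ∣ (A.natAbs : ℤ) := Int.natCast_dvd_natCast.mpr hpA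
      exact h1.trans (Int.natAbs_dvd.mpr dvd_rfl)
    have hpB : ¬ (p:ℤ) ∣ B := by
      intro hpB
      have h1 : (p:ℤ) ∣ (Int.gcd B n : ℤ) := Int.dvd_coe_gcd hpB hpn
      have h2 : (p:ℤ) ∣ (Int.gcd A (Int.gcd B n) : ℤ) := Int.dvd_coe_gcd hpA' h1
      rw [h] at h2
      have : p ∣ 1 := by exact_mod_cast h2
      exact hp.ne_one (Nat.dvd_one.mp this)
    have hpT : ¬ (p:ℤ) ∣ T := by
      intro hpT
      rw [hT] at hpT
      have : p ∣ ∏ q ∈ s, q := Int.natCast_dvd_natCast.mp hpT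
      obtain ⟨q, hq, hq'⟩ := (Nat.Prime.prime hp).exists_mem_finset_dvd this
      have hq2 := Finset.mem_filter.mp hq
      have : p = q :=
        (Nat.prime_dvd_prime_iff_eq hp (Nat.prime_of_mem_primeFactors hq2.1)).mp hq'
      exact hq2.2 (this ▸ hpA)
    have : (p:ℤ) ∣ T * B := (dvd_add_right hpA').mp hpAB
    rcases hpz.dvd_mul.mp this with h' | h'
    · exact hpT h'
    · exact hpB h'
  · have hps : p ∈ s := Finset.mem_filter.mpr ⟨Nat.mem_primeFactors.mpr ⟨hp, hpn', hn0⟩, hpA⟩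
    have hpT : (p:ℤ) ∣ T := by
      rw [hT]
      exact Int.natCast_dvd_natCast.mpr (Finset.dvd_prod_of_mem _ hps)
    have hA : (p:ℤ) ∣ A := by
      have := hpAB.sub (hpT.mul_right B)
      simpa using this
    exact hpA (Int.natCast_dvd_natCast.mp (Int.dvd_natAbs.mpr hA))

/-- Auxiliary: in `ZMod n`, if `α` and `β` generate the unit ideal then some `α + s*β`
is a unit. -/
lemma lemA {n : ℕ} [NeZero n] (α β : ZMod n) (h : IsCoprime α β) :
    ∃ s : ZMod n, IsUnit (α + s * β) := by
  obtain ⟨r, s, hrs⟩ := h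
  set A : ℤ := (α.val : ℤ) with hAdef
  set B : ℤ := (β.val : ℤ) with hBdef
  have hA : ((A : ℤ) : ZMod n) = α := by simp [hAdef, ZMod.natCast_val, ZMod.intCast_cast]
  have hB : ((B : ℤ) : ZMod n) = β := by simp [hBdef, ZMod.natCast_val, ZMod.intCast_cast]
  have hg : Int.gcd A (Int.gcd B n) = 1 := by
    set g : ℕ := Int.gcd A (Int.gcd B n) with hgdef
    have hgA : (g:ℤ) ∣ A := Int.gcd_dvd_left _ _
    have hgBn : (g:ℤ) ∣ (Int.gcd B n : ℤ) := Int.gcd_dvd_right _ _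
    have hgB : (g:ℤ) ∣ B := hgBn.trans (Int.gcd_dvd_left _ _)
    have hgn : (g:ℤ) ∣ (n:ℤ) := hgBn.trans (Int.gcd_dvd_right _ _)
    have key : (n:ℤ) ∣ (r.val : ℤ) * A + (s.val : ℤ) * B - 1 := by
      rw [← ZMod.intCast_zmod_eq_zero_iff_dvd]
      push_cast
      rw [hA, hB]
      simp only [ZMod.natCast_val, ZMod.intCast_cast, ZMod.cast_id', id_eq]
      rw [← hrs]; ring
    have h1 : (g:ℤ) ∣ 1 := by
      have h2 : (g:ℤ) ∣ (r.val : ℤ) * A + (s.val : ℤ) * B :=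
        dvd_add (hgA.mul_left _) (hgB.mul_left _)
      have h3 := h2.sub (hgn.trans key)
      simpa using h3
    have : g ∣ 1 := by exact_mod_cast h1
    exact Nat.dvd_one.mp this
  obtain ⟨T, hT⟩ := intA A B n (NeZero.ne n) hg
  refine ⟨(T : ZMod n), ?_⟩
  obtain ⟨u, v, huv⟩ := Int.isCoprime_iff_gcd_eq_one.mpr hT
  refine IsUnit.of_mul_eq_one ((u : ℤ) : ZMod n) ?_
  have := congrArg (fun z : ℤ => (z : ZMod n)) huv
  push_cast at this
  rw [hA, hB, ZMod.natCast_self] at this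
  rw [mul_comm]
  linear_combination this

/-- Middle vertex lemma: given two coprime pairs, there is a coprime pair `(x,y)` whose
determinant with each is a unit. -/
lemma lemB {n : ℕ} [NeZero n] (a c a' c' : ZMod n) (h : IsCoprime a c) (h' : IsCoprime a' c') :
    ∃ x y : ZMod n, IsCoprime x y ∧ IsUnit (a * y - c * x) ∧ IsUnit (x * c' - y * a') := by
  obtain ⟨r, s, hrs⟩ := h
  set x0 : ZMod n := -s with hx0
  set y0 : ZMod n := r with hy0
  have h1 : a * y0 - c * x0 = 1 := by rw [hx0, hy0, ← hrs]; ring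
  obtain ⟨r', s', hrs'⟩ := h'
  have hcop : IsCoprime (x0 * c' - y0 * a') (a * c' - c * a') := by
    refine ⟨-(r' * a) - s' * c, r' * x0 + s' * y0, ?_⟩
    have ha' : a' = -(x0 * c' - y0 * a') * a + (a * c' - c * a') * x0 := by
      linear_combination (-a') * h1
    have hc' : c' = -(x0 * c' - y0 * a') * c + (a * c' - c * a') * y0 := by
      linear_combination (-c') * h1
    linear_combination hrs' - r' * ha' - s' * hc'
  obtain ⟨w, hw⟩ := lemA _ _ hcop
  refine ⟨x0 + w * a, y0 + w * c, ⟨-c, a, by linear_combination h1⟩, ?_, ?_⟩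
  · have : a * (y0 + w * c) - c * (x0 + w * a) = 1 := by linear_combination h1
    rw [this]; exact isUnit_one
  · have : (x0 + w * a) * c' - (y0 + w * c) * a'
        = (x0 * c' - y0 * a') + w * (a * c' - c * a') := by ring
    rw [this]; exact hw

/-- Middle vertex lemma, even-to-odd: given coprime `(a,c)` and `(b,d)`, there is a coprime
`(x,y)` adjacent (as an even vertex) to the odd vertex `(b,d)`, with `det((a,c),(x,y))`
a unit. -/
lemma lemB' {n : ℕ} [NeZero n] (t : ℤ) (ht : IsUnit ((t : ZMod n))) (a c b d : ZMod n)
    (h : IsCoprime a c) (hw : IsCoprime b d) :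
    ∃ x y : ZMod n, IsCoprime x y ∧ x * d - (t : ZMod n) * (b * y) = 1 ∧
      IsUnit (a * y - c * x) := by
  obtain ⟨u, hu⟩ := ht
  set τ : ZMod n := ((u⁻¹ : (ZMod n)ˣ) : ZMod n) with hτ
  have htτ : (t : ZMod n) * τ = 1 := by rw [hτ, ← hu]; exact u.mul_inv
  obtain ⟨r, s, hrs⟩ := hw
  set x0 : ZMod n := s with hx0
  set y0 : ZMod n := -(r * τ) with hy0
  have h1 : x0 * d - (t : ZMod n) * (b * y0) = 1 := by
    rw [hx0, hy0, ← hrs]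
    linear_combination (r * b) * htτ
  obtain ⟨r₂, s₂, hrs₂⟩ := h
  have hcop : IsCoprime (a * y0 - c * x0) (a * d - (t : ZMod n) * (b * c)) := by
    refine ⟨-(r₂ * ((t:ZMod n) * b)) - s₂ * d, r₂ * x0 + s₂ * y0, ?_⟩
    have ha : a = (a * d - (t:ZMod n) * (b * c)) * x0 - (a * y0 - c * x0) * ((t:ZMod n) * b) := by
      linear_combination (-a) * h1
    have hc : c = (a * d - (t:ZMod n) * (b * c)) * y0 - (a * y0 - c * x0) * d := by
      linear_combination (-c) * h1
    linear_combination hrs₂ - r₂ * ha - s₂ * hc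
  obtain ⟨w, hw'⟩ := lemA _ _ hcop
  refine ⟨x0 + w * ((t:ZMod n) * b), y0 + w * d,
    ⟨d, -((t:ZMod n) * b), by linear_combination h1⟩, by linear_combination h1, ?_⟩
  have : a * (y0 + w * d) - c * (x0 + w * ((t:ZMod n) * b))
      = (a * y0 - c * x0) + w * (a * d - (t:ZMod n) * (b * c)) := by ring
  rw [this]; exact hw'

/-- Common odd neighbour of two even pairs with unit determinant. -/
lemma lemC {n : ℕ} (t : ℤ) (ht : IsUnit ((t : ZMod n))) (a c a' c' : ZMod n)
    (hδ : IsUnit (a * c' - c * a')) :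
    ∃ b d : ZMod n, IsCoprime b d ∧ a * d - (t : ZMod n) * (b * c) = 1 ∧
      a' * d - (t : ZMod n) * (b * c') = 1 := by
  obtain ⟨u, hu⟩ := ht
  set τ : ZMod n := ((u⁻¹ : (ZMod n)ˣ) : ZMod n) with hτ
  have htτ : (t : ZMod n) * τ = 1 := by rw [hτ, ← hu]; exact u.mul_inv
  obtain ⟨v, hv⟩ := hδ
  set e : ZMod n := ((v⁻¹ : (ZMod n)ˣ) : ZMod n) with he
  have hve : (a * c' - c * a') * e = 1 := by rw [he, ← hv]; exact v.mul_inv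
  refine ⟨(a' - a) * (e * τ), (c' - c) * e, ⟨-((t:ZMod n) * c), a, ?_⟩, ?_, ?_⟩
  · linear_combination hve + (e * c * (a - a')) * htτ
  · linear_combination hve + (e * c * (a - a')) * htτ
  · linear_combination hve + (e * c' * (a - a')) * htτ

/-- Common even neighbour of two odd pairs with unit determinant. -/
lemma lemC' {n : ℕ} (t : ℤ) (ht : IsUnit ((t : ZMod n))) (b d b' d' : ZMod n)
    (hδ : IsUnit (b * d' - d * b')) :
    ∃ a c : ZMod n, IsCoprime a c ∧ a * d - (t : ZMod n) * (b * c) = 1 ∧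
      a * d' - (t : ZMod n) * (b' * c) = 1 := by
  obtain ⟨u, hu⟩ := ht
  set τ : ZMod n := ((u⁻¹ : (ZMod n)ˣ) : ZMod n) with hτ
  have htτ : (t : ZMod n) * τ = 1 := by rw [hτ, ← hu]; exact u.mul_inv
  obtain ⟨v, hv⟩ := hδ
  set e : ZMod n := ((v⁻¹ : (ZMod n)ˣ) : ZMod n) with he
  have hve : (b * d' - d * b') * e = 1 := by rw [he, ← hv]; exact v.mul_inv
  refine ⟨(b - b') * e, (d - d') * (e * τ), ⟨d, -((t:ZMod n) * b), ?_⟩, ?_, ?_⟩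
  · linear_combination hve + (e * b * (d' - d)) * htτ
  · linear_combination hve + (e * b * (d' - d)) * htτ
  · linear_combination hve + (e * b' * (d' - d)) * htτ

open Sum in
/-- Adjacency constructor for the Hecke graph. -/
lemma hecke_adj {n : ℕ} (t : ℤ) (a c b d : ZMod n) (h1 : IsCoprime a c) (h2 : IsCoprime b d)
    (h : a * d - (t : ZMod n) * (b * c) = 1) :
    (HeckeGraph n t).Adj (inl (FareyVertex.mk n a c h1)) (inr (FareyVertex.mk n b d h2)) :=
  Or.inl ⟨a, c, b, d, ⟨h1, rfl⟩, ⟨h2, rfl⟩, Or.inl h⟩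

/-- Every Farey vertex has a representative. -/
lemma FareyVertex.exists_rep {n : ℕ} (u : FareyVertex n) :
    ∃ a c h, u = FareyVertex.mk n a c h := by
  obtain ⟨⟨⟨a, c⟩, h⟩, rfl⟩ := Quot.exists_rep u
  exact ⟨a, c, h, rfl⟩

open Sum in
/-- The key walk lemma: if `t` is a unit mod `n`, any two vertices of the Hecke graph of
level `n` with parameter `t` are joined by a walk of length at most `4`. -/
lemma hecke_walk {n : ℕ} [NeZero n] (t : ℤ) (ht : IsUnit ((t : ZMod n)))
    (u v : FareyVertex n ⊕ FareyVertex n) :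
    ∃ w : (HeckeGraph n t).Walk u v, w.length ≤ 4 := by
  have keyEO : ∀ (a c b d : ZMod n) (h1 : IsCoprime a c) (h2 : IsCoprime b d),
      ∃ w : (HeckeGraph n t).Walk (inl (FareyVertex.mk n a c h1))
        (inr (FareyVertex.mk n b d h2)), w.length ≤ 4 := by
    intro a c b d h1 h2
    obtain ⟨x, y, hm, hadj, hdet⟩ := lemB' t ht a c b d h1 h2
    obtain ⟨b1, d1, hb1, e1, e2⟩ := lemC t ht a c x y hdet
    exact ⟨SimpleGraph.Walk.cons (hecke_adj t a c b1 d1 h1 hb1 e1)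
      (SimpleGraph.Walk.cons ((hecke_adj t x y b1 d1 hm hb1 e2).symm)
      (SimpleGraph.Walk.cons (hecke_adj t x y b d hm h2 hadj)
      SimpleGraph.Walk.nil)), by simp⟩
  rcases u with u | u <;> rcases v with v | v <;>
    obtain ⟨a, c, h1, rfl⟩ := FareyVertex.exists_rep u <;>
    obtain ⟨a', c', h1', rfl⟩ := FareyVertex.exists_rep v
  · -- even-even
    obtain ⟨x, y, hm, hd1, hd2⟩ := lemB a c a' c' h1 h1'
    obtain ⟨b1, d1, hb1, e1, e2⟩ := lemC t ht a c x y hd1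
    obtain ⟨b2, d2, hb2, f1, f2⟩ := lemC t ht x y a' c' hd2
    exact ⟨SimpleGraph.Walk.cons (hecke_adj t a c b1 d1 h1 hb1 e1)
      (SimpleGraph.Walk.cons ((hecke_adj t x y b1 d1 hm hb1 e2).symm)
      (SimpleGraph.Walk.cons (hecke_adj t x y b2 d2 hm hb2 f1)
      (SimpleGraph.Walk.cons ((hecke_adj t a' c' b2 d2 h1' hb2 f2).symm)
      SimpleGraph.Walk.nil))), by simp⟩
  · -- even-odd
    exact keyEO a c a' c' h1 h1'
  · -- odd-even
    obtain ⟨w, hw⟩ := keyEO a' c' a c h1' h1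
    exact ⟨w.reverse, by simpa using hw⟩
  · -- odd-odd
    obtain ⟨x, y, hm, hd1, hd2⟩ := lemB a c a' c' h1 h1'
    obtain ⟨a1, c1, ha1, e1, e2⟩ := lemC' t ht a c x y hd1
    obtain ⟨a2, c2, ha2, f1, f2⟩ := lemC' t ht x y a' c' hd2
    exact ⟨SimpleGraph.Walk.cons ((hecke_adj t a1 c1 a c ha1 h1 e1).symm)
      (SimpleGraph.Walk.cons (hecke_adj t a1 c1 x y ha1 hm e2)
      (SimpleGraph.Walk.cons ((hecke_adj t a2 c2 x y ha2 hm f1).symm)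
      (SimpleGraph.Walk.cons (hecke_adj t a2 c2 a' c' ha2 h1' f2)
      SimpleGraph.Walk.nil))), by simp⟩

end AuxLemmas

/-- For every odd `n ≥ 3`, any two vertices of the Hecke graph
`G4(n) = HeckeGraph n 2` are joined by a walk of length at most 4; likewise for
`G6(n) = HeckeGraph n 3` for every `n ≥ 2` not divisible by `3`. -/
theorem stmt19 :
    (∀ n : ℕ, 3 ≤ n → Odd n → ∀ u v : FareyVertex n ⊕ FareyVertex n,
      ∃ w : (HeckeGraph n 2).Walk u v, w.length ≤ 4) ∧
    (∀ n : ℕ, 2 ≤ n → ¬ (3 ∣ n) → ∀ u v : FareyVertex n ⊕ FareyVertex n,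
      ∃ w : (HeckeGraph n 3).Walk u v, w.length ≤ 4) := by
  constructor
  · intro n hn hodd u v
    haveI : NeZero n := ⟨by omega⟩
    apply hecke_walk
    have h2 : ¬ 2 ∣ n := by have := Nat.odd_iff.mp hodd; omega
    have hcast : ((2:ℤ) : ZMod n) = ((2:ℕ) : ZMod n) := by push_cast; ring
    rw [hcast]
    exact (ZMod.isUnit_iff_coprime 2 n).mpr (Nat.prime_two.coprime_iff_not_dvd.mpr h2)
  · intro n hn h3 u v
    haveI : NeZero n := ⟨by omega⟩
    apply hecke_walk
    have hcast : ((3:ℤ) : ZMod n) = ((3:ℕ) : ZMod n) := by push_cast; ring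
    rw [hcast]
    exact (ZMod.isUnit_iff_coprime 3 n).mpr (Nat.prime_three.coprime_iff_not_dvd.mpr h3)
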